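/- In the Lagrangian setup, (Σ_{λ∈L̂} e_λ^L ⊗ λ)·(Σ_{μ∈L̂} e_μ^L ⊗ μ⁻¹) = 1 ⊗ 1 in K M ⊗ K M; consequently the twist J of the Lagrangian setup is invertible with J⁻¹ = Σ_{λ∈L̂} e_λ^L ⊗ λ⁻¹ = Σ_{l∈L} l⁻¹ ⊗ e_l^{L̂}. -/

import Mathlib

open scoped TensorProduct BigOperators
open MonoidAlgebra

noncomputable section

/-- The group `M := L̂ × L` of the Lagrangian setup. -/
def Mgrp (K : Type) [Field K] (L : Type) [CommGroup L] : Type := (L →* Kˣ) × L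

instance (K : Type) [Field K] (L : Type) [CommGroup L] : CommGroup (Mgrp K L) :=
  inferInstanceAs (CommGroup ((L →* Kˣ) × L))

variable (K : Type) [Field K] (L : Type) [CommGroup L]

/-- The character of `M = L̂ × L` attached to the pair `(l, λ) ∈ L × L̂` of the identification
`M̂ ≅ L × L̂`: it sends `(λ', l')` to `λ'(l)·λ(l')`. -/
def chi (l : L) (lam : L →* Kˣ) : Mgrp K L →* Kˣ where
  toFun x := x.1 l * lam x.2
  map_one' := by
    show (1 : L →* Kˣ) l * lam (1 : L) = 1
    simp
  map_mul' x y := by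
    show (x.1 * y.1) l * lam (x.2 * y.2) = x.1 l * lam x.2 * (y.1 l * lam y.2)
    simp only [MonoidHom.mul_apply, map_mul]
    exact mul_mul_mul_comm _ _ _ _

/-- The primitive idempotent `e_φ^M ∈ K M` attached to a character `φ` of `M`. -/
def eM (φ : Mgrp K L →* Kˣ) : MonoidAlgebra K (Mgrp K L) :=
  (Nat.card (Mgrp K L) : K)⁻¹ •
    ∑ᶠ x : Mgrp K L, ((φ x⁻¹ : Kˣ) : K) • MonoidAlgebra.of K (Mgrp K L) x

/-- The primitive idempotent `e_λ^L` of `K L` (for `λ ∈ L̂`), viewed inside `K M` via the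
identification of `L` with the subgroup `{1} × L` of `M`. -/
def eL (lam : L →* Kˣ) : MonoidAlgebra K (Mgrp K L) :=
  (Nat.card L : K)⁻¹ •
    ∑ᶠ l : L, ((lam l⁻¹ : Kˣ) : K) • MonoidAlgebra.of K (Mgrp K L) ((1 : L →* Kˣ), l)

/-- The primitive idempotent `e_l^{L̂}` of `K L̂` (for `l ∈ L`, viewed as the character
`μ ↦ μ(l)` of `L̂`), viewed inside `K M` via the identification of `L̂` with the subgroup
`L̂ × {1}` of `M`. -/
def eLhat (l : L) : MonoidAlgebra K (Mgrp K L) :=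
  (Nat.card (L →* Kˣ) : K)⁻¹ •
    ∑ᶠ mu : L →* Kˣ, (((mu l)⁻¹ : Kˣ) : K) • MonoidAlgebra.of K (Mgrp K L) (mu, (1 : L))

/-- The twist of the Lagrangian setup:
`J = Σ_{(l,λ),(l',λ')∈M̂} ω((l,λ),(l',λ'))·e_{(l,λ)}^M ⊗ e_{(l',λ')}^M`
where `ω((l,λ),(l',λ')) = λ(l')`. -/
def Jtwist : MonoidAlgebra K (Mgrp K L) ⊗[K] MonoidAlgebra K (Mgrp K L) :=
  ∑ᶠ l : L, ∑ᶠ lam : L →* Kˣ, ∑ᶠ l' : L, ∑ᶠ lam' : L →* Kˣ,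
    ((lam l' : Kˣ) : K) • (eM K L (chi K L l lam) ⊗ₜ[K] eM K L (chi K L l' lam'))


/-- `J⁻¹ = Σ_{λ∈L̂} e_λ^L ⊗ λ⁻¹`. -/
def Jinv : MonoidAlgebra K (Mgrp K L) ⊗[K] MonoidAlgebra K (Mgrp K L) :=
  ∑ᶠ lam : L →* Kˣ, eL K L lam ⊗ₜ[K] MonoidAlgebra.of K (Mgrp K L) (lam⁻¹, (1 : L))


-- ================= auxiliary lemmas =================
section Aux

open scoped Classical

variable {K : Type} [Field K] {L : Type} [CommGroup L]

lemma mgrp_mul (a c : L →* Kˣ) (b d : L) :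
    ((a, b) : Mgrp K L) * ((c, d) : Mgrp K L) = ((a * c, b * d) : Mgrp K L) := rfl

lemma mgrp_one : (1 : Mgrp K L) = (((1 : L →* Kˣ), (1 : L)) : Mgrp K L) := rfl

lemma mgrp_inv (a : L →* Kˣ) (b : L) :
    ((a, b) : Mgrp K L)⁻¹ = ((a⁻¹, b⁻¹) : Mgrp K L) := rfl

instance auxFintypeM [Fintype L] [Fintype (L →* Kˣ)] : Fintype (Mgrp K L) :=
  inferInstanceAs (Fintype ((L →* Kˣ) × L))

lemma sum_M {A : Type} [AddCommMonoid A] [Fintype L] [Fintype (L →* Kˣ)]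
    (F : Mgrp K L → A) :
    ∑ x : Mgrp K L, F x = ∑ mu : L →* Kˣ, ∑ m : L, F (mu, m) :=
  Fintype.sum_prod_type (f := fun p : (L →* Kˣ) × L => F p)

lemma card_M [Finite L] [Finite (L →* Kˣ)] :
    Nat.card (Mgrp K L) = Nat.card (L →* Kˣ) * Nat.card L := by
  have : Nat.card (Mgrp K L) = Nat.card ((L →* Kˣ) × L) := rfl
  rw [this, Nat.card_prod]

lemma eL_eq [Fintype L] (lam : L →* Kˣ) :
    eL K L lam = ∑ l : L, MonoidAlgebra.single (M := Mgrp K L) ((1 : L →* Kˣ), l)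
      ((Nat.card L : K)⁻¹ * ((lam l⁻¹ : Kˣ) : K)) := by
  rw [eL, finsum_eq_sum_of_fintype, Finset.smul_sum]
  refine Finset.sum_congr rfl fun l _ => ?_
  erw [MonoidAlgebra.of_apply, smul_smul, MonoidAlgebra.smul_single', mul_one]

lemma eLhat_eq [Fintype (L →* Kˣ)] (l : L) :
    eLhat K L l = ∑ mu : L →* Kˣ, MonoidAlgebra.single (M := Mgrp K L) (mu, (1 : L))
      ((Nat.card (L →* Kˣ) : K)⁻¹ * (((mu l)⁻¹ : Kˣ) : K)) := by
  rw [eLhat, finsum_eq_sum_of_fintype, Finset.smul_sum]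
  refine Finset.sum_congr rfl fun mu _ => ?_
  erw [MonoidAlgebra.of_apply, smul_smul, MonoidAlgebra.smul_single', mul_one]

lemma eM_eq [Fintype L] [Fintype (L →* Kˣ)] (φ : Mgrp K L →* Kˣ) :
    eM K L φ = ∑ x : Mgrp K L, MonoidAlgebra.single x
      ((Nat.card (Mgrp K L) : K)⁻¹ * ((φ x⁻¹ : Kˣ) : K)) := by
  rw [eM, finsum_eq_sum_of_fintype, Finset.smul_sum]
  refine Finset.sum_congr rfl fun x _ => ?_
  erw [MonoidAlgebra.of_apply, smul_smul, MonoidAlgebra.smul_single', mul_one]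


lemma single_sum' (a : Mgrp K L) {ι : Type} [Fintype ι] (f : ι → K) :
    ∑ i : ι, MonoidAlgebra.single a (f i) = MonoidAlgebra.single a (∑ i : ι, f i) :=
  (map_sum (MonoidAlgebra.singleAddHom a) f Finset.univ).symm

lemma single_sum2 (a : Mgrp K L) {ι κ : Type} [Fintype ι] [Fintype κ] (f : ι → κ → K) :
    ∑ i : ι, ∑ j : κ, MonoidAlgebra.single a (f i j)
      = MonoidAlgebra.single a (∑ i : ι, ∑ j : κ, f i j) := by
  simp_rw [single_sum']

lemma sum_single_ite {ι : Type} [Fintype ι] [DecidableEq ι] (b : ι) (g : ι → Mgrp K L)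
    (d : ι → K) :
    ∑ i : ι, MonoidAlgebra.single (g i) (if i = b then d i else 0)
      = MonoidAlgebra.single (g b) (d b) := by
  rw [Finset.sum_eq_single_of_mem b (Finset.mem_univ b)]
  · simp
  · intro i _ hi
    simp [hi]

lemma auxFiniteHom (K : Type*) [Field K] (G : Type*) [Group G] [Finite G] :
    Finite (G →* Kˣ) := by
  have h : Function.Injective
      (fun φ : G →* Kˣ => fun g : G => (⟨φ g, by
        rw [mem_rootsOfUnity]
        rw [← map_pow]
        simp [pow_card_eq_one']⟩ : rootsOfUnity (Nat.card G) K)) := by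
    intro φ ψ h
    ext g
    have := congrFun h g
    simpa [Subtype.ext_iff, Units.ext_iff] using this
  have : NeZero (Nat.card G) := ⟨Nat.card_pos.ne'⟩
  have : Finite (rootsOfUnity (Nat.card G) K) := by infer_instance
  exact Finite.of_injective _ h

lemma auxCardHomLe (K : Type*) [Field K] (G : Type*) [CommGroup G] [Finite G] :
    Nat.card (G →* Kˣ) ≤ Nat.card G := by
  have : Finite (G →* Kˣ) := auxFiniteHom K G
  letI : Fintype G := Fintype.ofFinite G
  letI : Fintype (G →* Kˣ) := Fintype.ofFinite _
  have hinj : Function.Injective (fun φ : G →* Kˣ => ((Units.coeHom K).comp φ : G →* K)) := by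
    intro φ ψ h
    ext g
    have := DFunLike.congr_fun h g
    simpa [Units.ext_iff] using this
  have hli : LinearIndependent K
      (fun φ : G →* Kˣ => (((Units.coeHom K).comp φ : G →* K) : G → K)) :=
    (linearIndependent_monoidHom G K).comp _ hinj
  have := hli.fintype_card_le_finrank
  rw [Module.finrank_pi] at this
  simpa [Nat.card_eq_fintype_card] using this

lemma auxExistsChar [Finite L]
    (hL : Nat.card (L →* Kˣ) = Nat.card L) {l : L} (hl : l ≠ 1) :
    ∃ φ : L →* Kˣ, φ l ≠ 1 := by
  by_contra h
  push_neg at h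
  set H := Subgroup.zpowers l with hH
  have hker : ∀ φ : L →* Kˣ, ∀ x ∈ H, φ x = 1 := by
    intro φ x hx
    obtain ⟨k, rfl⟩ := Subgroup.mem_zpowers_iff.mp hx
    rw [map_zpow, h φ, one_zpow]
  have hinj : Function.Injective
      (fun φ : L →* Kˣ => QuotientGroup.lift H φ (hker φ)) := by
    intro φ ψ hfg
    ext x
    have := DFunLike.congr_fun hfg (QuotientGroup.mk x)
    simp only [QuotientGroup.lift_mk] at this
    exact congrArg Units.val this
  have : Finite ((L ⧸ H) →* Kˣ) := auxFiniteHom K _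
  have h1 : Nat.card (L →* Kˣ) ≤ Nat.card ((L ⧸ H) →* Kˣ) :=
    Nat.card_le_card_of_injective _ hinj
  have h2 : Nat.card ((L ⧸ H) →* Kˣ) ≤ Nat.card (L ⧸ H) := auxCardHomLe K _
  have h3 : Nat.card L = Nat.card (L ⧸ H) * Nat.card H :=
    (Subgroup.card_eq_card_quotient_mul_card_subgroup H)
  have h4 : 2 ≤ Nat.card H := by
    have : Nontrivial H := ⟨⟨⟨l, Subgroup.mem_zpowers l⟩, 1, by
      simp [Subtype.ext_iff, hl]⟩⟩
    exact Finite.one_lt_card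
  have h5 : 0 < Nat.card (L ⧸ H) := Nat.card_pos
  rw [hL] at h1
  have h6 : Nat.card (L ⧸ H) * 2 ≤ Nat.card (L ⧸ H) * Nat.card H :=
    Nat.mul_le_mul_left _ h4
  omega

lemma auxSumChar' {G : Type} [CommGroup G] [Fintype G] (φ : G →* Kˣ) :
    ∑ g : G, ((φ g : Kˣ) : K) = if φ = 1 then (Nat.card G : K) else 0 := by
  split_ifs with h
  · subst h
    simp [Nat.card_eq_fintype_card]
  · have hf : (Units.coeHom K).comp φ ≠ 1 := by
      intro hc
      apply h
      ext g
      simpa using DFunLike.congr_fun hc g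
    simpa using sum_hom_units_eq_zero ((Units.coeHom K).comp φ) hf

private def evalAt (l : L) : (L →* Kˣ) →* Kˣ where
  toFun φ := φ l
  map_one' := rfl
  map_mul' _ _ := rfl

lemma auxSumCharDual' [Finite L] [Fintype (L →* Kˣ)]
    (hL : Nat.card (L →* Kˣ) = Nat.card L) (l : L) :
    ∑ φ : L →* Kˣ, ((φ l : Kˣ) : K) = if l = 1 then (Nat.card (L →* Kˣ) : K) else 0 := by
  have key := auxSumChar' (evalAt (K := K) l)
  have h0 : ∑ φ : L →* Kˣ, ((φ l : Kˣ) : K)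
      = ∑ φ : L →* Kˣ, ((evalAt (K := K) l φ : Kˣ) : K) := rfl
  rw [h0, key]
  split_ifs with h1 h2 h3
  · rfl
  · exfalso
    obtain ⟨φ, hφ⟩ := auxExistsChar hL h2
    exact hφ (DFunLike.congr_fun h1 φ)
  · exfalso; apply h1; subst h3
    exact DFunLike.ext _ _ fun φ => map_one φ
  · rfl

lemma eL_mul_eL [CharZero K] [Fintype L] (lam mu : L →* Kˣ) :
    eL K L lam * eL K L mu = if lam = mu then eL K L lam else 0 := by
  classical
  set c : K := (Nat.card L : K)⁻¹ with hc
  have hcard : (Nat.card L : K) ≠ 0 := Nat.cast_ne_zero.mpr Nat.card_pos.ne'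
  have key : eL K L lam * eL K L mu = ∑ m : L, MonoidAlgebra.single (M := Mgrp K L) ((1 : L →* Kˣ), m)
      ((c * c) * ((mu m⁻¹ : Kˣ) : K) * (∑ l : L, (((lam⁻¹ * mu) l : Kˣ) : K))) := by
    rw [eL_eq, eL_eq, Fintype.sum_mul_sum]
    calc
      ∑ l : L, ∑ l' : L, MonoidAlgebra.single (M := Mgrp K L) ((1:L→*Kˣ), l) (c * ((lam l⁻¹ : Kˣ) : K)) *
          MonoidAlgebra.single (M := Mgrp K L) ((1:L→*Kˣ), l') (c * ((mu l'⁻¹ : Kˣ) : K))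
        = ∑ l : L, ∑ m : L, MonoidAlgebra.single (M := Mgrp K L) ((1:L→*Kˣ), m)
            ((c * c) * ((mu m⁻¹ : Kˣ) : K) * (((lam⁻¹ * mu) l : Kˣ) : K)) := by
          refine Finset.sum_congr rfl fun l _ => ?_
          refine Fintype.sum_bijective (fun l' => l * l') (Group.mulLeft_bijective l) _ _
            (fun l' => ?_)
          erw [MonoidAlgebra.single_mul_single, mgrp_mul,
            show ((1:L→*Kˣ) * 1) = 1 from one_mul (1 : L →* Kˣ)]
          congr 1
          simp only [mul_inv_rev, inv_inv, map_mul, map_inv, MonoidHom.mul_apply,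
            MonoidHom.inv_apply, Units.val_mul, Units.val_inv_eq_inv_val]
          field_simp
      _ = ∑ m : L, ∑ l : L, MonoidAlgebra.single (M := Mgrp K L) ((1:L→*Kˣ), m)
            ((c * c) * ((mu m⁻¹ : Kˣ) : K) * (((lam⁻¹ * mu) l : Kˣ) : K)) :=
          Finset.sum_comm
      _ = _ := by
          refine Finset.sum_congr rfl fun m _ => ?_
          erw [single_sum', ← Finset.mul_sum]
  rw [key, auxSumChar']
  by_cases h : lam = mu
  · subst h
    rw [if_pos rfl, eL_eq]
    refine Finset.sum_congr rfl fun m _ => ?_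
    rw [if_pos (inv_mul_cancel lam)]
    congr 1
    rw [hc]
    field_simp
  · have h' : lam⁻¹ * mu ≠ 1 := by
      intro hcon; exact h (inv_mul_eq_one.mp hcon)
    rw [if_neg h', if_neg h]
    simp only [mul_zero]; exact Finset.sum_eq_zero fun _ _ => MonoidAlgebra.single_zero _

lemma eLhat_mul_eLhat [CharZero K] [Fintype L] [Fintype (L →* Kˣ)]
    (hL : Nat.card (L →* Kˣ) = Nat.card L) (l m : L) :
    eLhat K L l * eLhat K L m = if l = m then eLhat K L l else 0 := by
  classical
  set c : K := (Nat.card (L →* Kˣ) : K)⁻¹ with hc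
  have hcard : (Nat.card (L →* Kˣ) : K) ≠ 0 := by
    rw [hL]; exact Nat.cast_ne_zero.mpr Nat.card_pos.ne'
  have key : eLhat K L l * eLhat K L m = ∑ ρ : L →* Kˣ, MonoidAlgebra.single (M := Mgrp K L) (ρ, (1:L))
      ((c * c) * (((ρ m)⁻¹ : Kˣ) : K) * (∑ mu : L →* Kˣ, ((mu (l⁻¹ * m) : Kˣ) : K))) := by
    rw [eLhat_eq, eLhat_eq, Fintype.sum_mul_sum]
    calc
      ∑ mu : L →* Kˣ, ∑ nu : L →* Kˣ,
          MonoidAlgebra.single (M := Mgrp K L) (mu, (1:L)) (c * (((mu l)⁻¹ : Kˣ) : K)) *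
          MonoidAlgebra.single (M := Mgrp K L) (nu, (1:L)) (c * (((nu m)⁻¹ : Kˣ) : K))
        = ∑ mu : L →* Kˣ, ∑ ρ : L →* Kˣ, MonoidAlgebra.single (M := Mgrp K L) (ρ, (1:L))
            ((c * c) * (((ρ m)⁻¹ : Kˣ) : K) * ((mu (l⁻¹ * m) : Kˣ) : K)) := by
          refine Finset.sum_congr rfl fun mu _ => ?_
          refine Fintype.sum_bijective (fun nu => mu * nu) (Group.mulLeft_bijective mu) _ _
            (fun nu => ?_)
          erw [MonoidAlgebra.single_mul_single, mgrp_mul,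
            show ((1:L) * 1) = 1 from one_mul (1 : L)]
          congr 1
          simp only [map_mul, MonoidHom.mul_apply, MonoidHom.inv_apply, map_inv,
            mul_inv_rev, Units.val_mul, Units.val_inv_eq_inv_val]
          field_simp
      _ = ∑ ρ : L →* Kˣ, ∑ mu : L →* Kˣ, MonoidAlgebra.single (M := Mgrp K L) (ρ, (1:L))
            ((c * c) * (((ρ m)⁻¹ : Kˣ) : K) * ((mu (l⁻¹ * m) : Kˣ) : K)) :=
          Finset.sum_comm
      _ = _ := by
          refine Finset.sum_congr rfl fun ρ _ => ?_
          erw [single_sum', ← Finset.mul_sum]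
  rw [key, auxSumCharDual' hL]
  by_cases h : l = m
  · subst h
    rw [if_pos rfl, eLhat_eq]
    refine Finset.sum_congr rfl fun ρ _ => ?_
    rw [if_pos (inv_mul_cancel l)]
    congr 1
    rw [hc]
    field_simp
  · have h' : l⁻¹ * m ≠ 1 := fun hcon => h (inv_mul_eq_one.mp hcon)
    rw [if_neg h', if_neg h]
    simp only [mul_zero]; exact Finset.sum_eq_zero fun _ _ => MonoidAlgebra.single_zero _

lemma sum_eL [CharZero K] [Fintype L] [Fintype (L →* Kˣ)]
    (hL : Nat.card (L →* Kˣ) = Nat.card L) :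
    ∑ lam : L →* Kˣ, eL K L lam = 1 := by
  classical
  have hcard : (Nat.card L : K) ≠ 0 := Nat.cast_ne_zero.mpr Nat.card_pos.ne'
  calc ∑ lam : L →* Kˣ, eL K L lam
      = ∑ lam : L →* Kˣ, ∑ l : L, MonoidAlgebra.single (M := Mgrp K L) ((1:L→*Kˣ), l)
          ((Nat.card L : K)⁻¹ * ((lam l⁻¹ : Kˣ) : K)) :=
        Finset.sum_congr rfl fun lam _ => eL_eq lam
    _ = ∑ l : L, ∑ lam : L →* Kˣ, MonoidAlgebra.single (M := Mgrp K L) ((1:L→*Kˣ), l)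
          ((Nat.card L : K)⁻¹ * ((lam l⁻¹ : Kˣ) : K)) := Finset.sum_comm
    _ = ∑ l : L, MonoidAlgebra.single (M := Mgrp K L) ((1:L→*Kˣ), l)
          (if l = 1 then (Nat.card L : K)⁻¹ * (Nat.card (L →* Kˣ) : K) else 0) := by
        refine Finset.sum_congr rfl fun l _ => ?_
        erw [single_sum', ← Finset.mul_sum, auxSumCharDual' hL l⁻¹]
        by_cases h : l = 1
        · subst h
          rw [if_pos inv_one, if_pos rfl]
        · rw [if_neg (fun hc0 => h (inv_eq_one.mp hc0)), if_neg h, mul_zero]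
    _ = MonoidAlgebra.single (M := Mgrp K L) ((1:L→*Kˣ), (1:L))
          ((Nat.card L : K)⁻¹ * (Nat.card (L →* Kˣ) : K)) :=
        sum_single_ite 1 _ _
    _ = 1 := by
        rw [hL, inv_mul_cancel₀ hcard]
        exact MonoidAlgebra.one_def.symm

lemma sum_eLhat [CharZero K] [Fintype L] [Fintype (L →* Kˣ)]
    (hL : Nat.card (L →* Kˣ) = Nat.card L) :
    ∑ l : L, eLhat K L l = 1 := by
  classical
  have hcard : (Nat.card (L →* Kˣ) : K) ≠ 0 := by
    rw [hL]; exact Nat.cast_ne_zero.mpr Nat.card_pos.ne'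
  calc ∑ l : L, eLhat K L l
      = ∑ l : L, ∑ mu : L →* Kˣ, MonoidAlgebra.single (M := Mgrp K L) (mu, (1:L))
          ((Nat.card (L →* Kˣ) : K)⁻¹ * (((mu l)⁻¹ : Kˣ) : K)) :=
        Finset.sum_congr rfl fun l _ => eLhat_eq l
    _ = ∑ mu : L →* Kˣ, ∑ l : L, MonoidAlgebra.single (M := Mgrp K L) (mu, (1:L))
          ((Nat.card (L →* Kˣ) : K)⁻¹ * (((mu l)⁻¹ : Kˣ) : K)) := Finset.sum_comm
    _ = ∑ mu : L →* Kˣ, MonoidAlgebra.single (M := Mgrp K L) (mu, (1:L))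
          (if mu = 1 then (Nat.card (L →* Kˣ) : K)⁻¹ * (Nat.card L : K) else 0) := by
        refine Finset.sum_congr rfl fun mu _ => ?_
        erw [single_sum', ← Finset.mul_sum]
        have h0 : ∑ l : L, (((mu l)⁻¹ : Kˣ) : K) = ∑ l : L, ((mu⁻¹ l : Kˣ) : K) := rfl
        rw [h0, auxSumChar' (mu⁻¹)]
        by_cases h : mu = 1
        · subst h
          rw [if_pos (by ext x; simp : (1 : L →* Kˣ)⁻¹ = 1), if_pos rfl]
        · erw [if_neg (show ¬ mu⁻¹ = 1 from fun hc0 => h (by ext y; simpa using DFunLike.congr_fun hc0 y)), if_neg h, mul_zero]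
    _ = MonoidAlgebra.single (M := Mgrp K L) ((1:L→*Kˣ), (1:L))
          ((Nat.card (L →* Kˣ) : K)⁻¹ * (Nat.card L : K)) :=
        sum_single_ite 1 _ _
    _ = 1 := by
        have hcard2 : (Nat.card L : K) ≠ 0 := Nat.cast_ne_zero.mpr Nat.card_pos.ne'
        rw [hL, inv_mul_cancel₀ hcard2]
        exact MonoidAlgebra.one_def.symm

lemma chi_inv_val (l' : L) (lam' mu : L →* Kˣ) (m : L) :
    ((chi K L l' lam' (((mu, m) : Mgrp K L)⁻¹) : Kˣ) : K)
      = ((mu⁻¹ l' : Kˣ) : K) * ((lam' m⁻¹ : Kˣ) : K) := by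
  erw [show ((mu, m) : Mgrp K L)⁻¹ = ((mu⁻¹, m⁻¹) : Mgrp K L) from rfl]
  erw [show chi K L l' lam' ((mu⁻¹, m⁻¹) : Mgrp K L) = mu⁻¹ l' * lam' m⁻¹ from rfl]
  rw [Units.val_mul]

lemma claimC [CharZero K] [Fintype L] [Fintype (L →* Kˣ)]
    (hL : Nat.card (L →* Kˣ) = Nat.card L) (l' : L) :
    ∑ lam' : L →* Kˣ, eM K L (chi K L l' lam') = eLhat K L l' := by
  classical
  set C : K := (Nat.card (Mgrp K L) : K)⁻¹ with hC
  have hN : (Nat.card (L →* Kˣ) : K) ≠ 0 := by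
    rw [hL]; exact Nat.cast_ne_zero.mpr Nat.card_pos.ne'
  have hCN : C * (Nat.card (L →* Kˣ) : K) = (Nat.card (L →* Kˣ) : K)⁻¹ := by
    rw [hC, card_M, hL]
    push_cast
    field_simp
    try ring
  calc ∑ lam' : L →* Kˣ, eM K L (chi K L l' lam')
      = ∑ lam' : L →* Kˣ, ∑ x : Mgrp K L, MonoidAlgebra.single x
          (C * ((chi K L l' lam' x⁻¹ : Kˣ) : K)) :=
        Finset.sum_congr rfl fun lam' _ => eM_eq _
    _ = ∑ x : Mgrp K L, MonoidAlgebra.single x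
          (C * ∑ lam' : L →* Kˣ, ((chi K L l' lam' x⁻¹ : Kˣ) : K)) := by
        rw [Finset.sum_comm]
        exact Finset.sum_congr rfl fun x _ => by rw [single_sum', ← Finset.mul_sum]
    _ = ∑ mu : L →* Kˣ, ∑ m : L, MonoidAlgebra.single (M := Mgrp K L) ((mu, m) : Mgrp K L)
          (C * ∑ lam' : L →* Kˣ, ((chi K L l' lam' (((mu, m) : Mgrp K L)⁻¹) : Kˣ) : K)) :=
        sum_M _
    _ = ∑ mu : L →* Kˣ, ∑ m : L, MonoidAlgebra.single (M := Mgrp K L) ((mu, m) : Mgrp K L)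
          (if m = 1 then C * (Nat.card (L →* Kˣ) : K) * (((mu l')⁻¹ : Kˣ) : K) else 0) := by
        refine Finset.sum_congr rfl fun mu _ => Finset.sum_congr rfl fun m _ => ?_
        congr 1
        have h1 : ∑ lam' : L →* Kˣ, ((chi K L l' lam' (((mu, m) : Mgrp K L)⁻¹) : Kˣ) : K)
            = ((mu⁻¹ l' : Kˣ) : K) * ∑ lam' : L →* Kˣ, ((lam' m⁻¹ : Kˣ) : K) := by
          rw [Finset.mul_sum]
          exact Finset.sum_congr rfl fun lam' _ => chi_inv_val l' lam' mu m
        rw [h1, auxSumCharDual' hL m⁻¹]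
        by_cases h : m = 1
        · subst h
          rw [if_pos (inv_one : (1 : L)⁻¹ = 1), if_pos rfl]
          rw [show ((mu⁻¹ l' : Kˣ) : K) = (((mu l')⁻¹ : Kˣ) : K) from rfl]
          ring
        · rw [if_neg (fun hc0 => h (inv_eq_one.mp hc0)), if_neg h]
          ring
    _ = ∑ mu : L →* Kˣ, MonoidAlgebra.single (M := Mgrp K L) ((mu, (1:L)) : Mgrp K L)
          (C * (Nat.card (L →* Kˣ) : K) * (((mu l')⁻¹ : Kˣ) : K)) :=
        Finset.sum_congr rfl fun mu _ => sum_single_ite 1 _ _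
    _ = eLhat K L l' := by
        rw [eLhat_eq]
        exact Finset.sum_congr rfl fun mu _ => by rw [hCN]

lemma claimB [CharZero K] [Fintype L] [Fintype (L →* Kˣ)]
    (hL : Nat.card (L →* Kˣ) = Nat.card L) (l' : L) :
    ∑ l : L, ∑ lam : L →* Kˣ, ((lam l' : Kˣ) : K) • eM K L (chi K L l lam)
      = MonoidAlgebra.single (M := Mgrp K L) (((1 : L →* Kˣ), l') : Mgrp K L) 1 := by
  classical
  set C : K := (Nat.card (Mgrp K L) : K)⁻¹ with hC
  have hN : (Nat.card (L →* Kˣ) : K) ≠ 0 := by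
    rw [hL]; exact Nat.cast_ne_zero.mpr Nat.card_pos.ne'
  have hLne : (Nat.card L : K) ≠ 0 := Nat.cast_ne_zero.mpr Nat.card_pos.ne'
  have hfull : C * ((Nat.card L : K) * (Nat.card (L →* Kˣ) : K)) = 1 := by
    rw [hC, card_M]
    push_cast
    field_simp
    try ring
  calc ∑ l : L, ∑ lam : L →* Kˣ, ((lam l' : Kˣ) : K) • eM K L (chi K L l lam)
      = ∑ l : L, ∑ lam : L →* Kˣ, ∑ x : Mgrp K L, MonoidAlgebra.single x
          (C * (((lam l' : Kˣ) : K) * ((chi K L l lam x⁻¹ : Kˣ) : K))) := by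
        refine Finset.sum_congr rfl fun l _ => Finset.sum_congr rfl fun lam _ => ?_
        rw [eM_eq, Finset.smul_sum]
        refine Finset.sum_congr rfl fun x _ => ?_
        rw [MonoidAlgebra.smul_single']
        congr 1
        ring
    _ = ∑ l : L, ∑ x : Mgrp K L, ∑ lam : L →* Kˣ, MonoidAlgebra.single x
          (C * (((lam l' : Kˣ) : K) * ((chi K L l lam x⁻¹ : Kˣ) : K))) :=
        Finset.sum_congr rfl fun l _ => Finset.sum_comm
    _ = ∑ x : Mgrp K L, ∑ l : L, ∑ lam : L →* Kˣ, MonoidAlgebra.single x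
          (C * (((lam l' : Kˣ) : K) * ((chi K L l lam x⁻¹ : Kˣ) : K))) :=
        Finset.sum_comm
    _ = ∑ x : Mgrp K L, MonoidAlgebra.single x
          (C * ∑ l : L, ∑ lam : L →* Kˣ,
            (((lam l' : Kˣ) : K) * ((chi K L l lam x⁻¹ : Kˣ) : K))) := by
        refine Finset.sum_congr rfl fun x _ => ?_
        rw [single_sum2]
        congr 1
        rw [Finset.mul_sum]
        exact Finset.sum_congr rfl fun l _ => (Finset.mul_sum _ _ _).symm
    _ = ∑ mu : L →* Kˣ, ∑ m : L, MonoidAlgebra.single (M := Mgrp K L) ((mu, m) : Mgrp K L)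
          (C * ∑ l : L, ∑ lam : L →* Kˣ,
            (((lam l' : Kˣ) : K) * ((chi K L l lam (((mu, m) : Mgrp K L)⁻¹) : Kˣ) : K))) :=
        sum_M _
    _ = ∑ mu : L →* Kˣ, ∑ m : L, MonoidAlgebra.single (M := Mgrp K L) ((mu, m) : Mgrp K L)
          (if mu = 1 then (if m = l' then
            C * ((Nat.card L : K) * (Nat.card (L →* Kˣ) : K)) else 0) else 0) := by
        refine Finset.sum_congr rfl fun mu _ => Finset.sum_congr rfl fun m _ => ?_
        congr 1
        have h1 : ∑ l : L, ∑ lam : L →* Kˣ,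
            (((lam l' : Kˣ) : K) * ((chi K L l lam (((mu, m) : Mgrp K L)⁻¹) : Kˣ) : K))
            = (∑ l : L, ((mu⁻¹ l : Kˣ) : K)) * (∑ lam : L →* Kˣ, ((lam (l' * m⁻¹) : Kˣ) : K)) := by
          rw [Fintype.sum_mul_sum]
          refine Finset.sum_congr rfl fun l _ => Finset.sum_congr rfl fun lam _ => ?_
          rw [chi_inv_val l lam mu m, map_mul, Units.val_mul]
          ring
        rw [h1, auxSumChar' (mu⁻¹), auxSumCharDual' hL (l' * m⁻¹)]
        by_cases hmu : mu = 1
        · subst hmu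
          rw [if_pos (by ext x; simp : (1 : L →* Kˣ)⁻¹ = 1), if_pos rfl]
          by_cases hm : m = l'
          · subst hm
            rw [if_pos (mul_inv_cancel _), if_pos rfl]
            try ring
          · rw [if_neg (fun hc0 => hm (mul_inv_eq_one.mp hc0).symm), if_neg hm]
            ring
        · rw [if_neg (show ¬ mu⁻¹ = 1 from fun hc0 => hmu (by ext y; simpa using DFunLike.congr_fun hc0 y)), if_neg hmu]
          ring
    _ = ∑ mu : L →* Kˣ, (if mu = 1 then MonoidAlgebra.single (M := Mgrp K L) ((mu, l') : Mgrp K L)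
            (C * ((Nat.card L : K) * (Nat.card (L →* Kˣ) : K))) else 0) := by
        refine Finset.sum_congr rfl fun mu _ => ?_
        by_cases hmu : mu = 1
        · subst hmu
          simp only [eq_self_iff_true, if_true]
          exact sum_single_ite l' _ _
        · simp only [hmu, ↓reduceIte]; exact Finset.sum_eq_zero fun _ _ => MonoidAlgebra.single_zero _
    _ = MonoidAlgebra.single (M := Mgrp K L) (((1 : L →* Kˣ), l') : Mgrp K L) 1 := by
        rw [Finset.sum_ite_eq' Finset.univ (1 : L →* Kˣ)]
        rw [if_pos (Finset.mem_univ _), hfull]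

lemma Jtwist_eq [CharZero K] [Fintype L] [Fintype (L →* Kˣ)]
    (hL : Nat.card (L →* Kˣ) = Nat.card L) :
    Jtwist K L = ∑ l' : L,
      MonoidAlgebra.single (M := Mgrp K L) (((1:L→*Kˣ), l') : Mgrp K L) 1 ⊗ₜ[K] eLhat K L l' := by
  rw [Jtwist]
  simp only [finsum_eq_sum_of_fintype]
  calc ∑ l : L, ∑ lam : L →* Kˣ, ∑ l' : L, ∑ lam' : L →* Kˣ,
        ((lam l' : Kˣ) : K) • (eM K L (chi K L l lam) ⊗ₜ[K] eM K L (chi K L l' lam'))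
      = ∑ l : L, ∑ lam : L →* Kˣ, ∑ l' : L,
          ((lam l' : Kˣ) : K) • (eM K L (chi K L l lam) ⊗ₜ[K] eLhat K L l') := by
        refine Finset.sum_congr rfl fun l _ => Finset.sum_congr rfl fun lam _ =>
          Finset.sum_congr rfl fun l' _ => ?_
        rw [← claimC hL l', TensorProduct.tmul_sum, Finset.smul_sum]
    _ = ∑ l : L, ∑ l' : L, ∑ lam : L →* Kˣ,
          ((lam l' : Kˣ) : K) • (eM K L (chi K L l lam) ⊗ₜ[K] eLhat K L l') :=
        Finset.sum_congr rfl fun l _ => Finset.sum_comm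
    _ = ∑ l' : L, ∑ l : L, ∑ lam : L →* Kˣ,
          ((lam l' : Kˣ) : K) • (eM K L (chi K L l lam) ⊗ₜ[K] eLhat K L l') :=
        Finset.sum_comm
    _ = ∑ l' : L, (∑ l : L, ∑ lam : L →* Kˣ,
          ((lam l' : Kˣ) : K) • eM K L (chi K L l lam)) ⊗ₜ[K] eLhat K L l' := by
        refine Finset.sum_congr rfl fun l' _ => ?_
        rw [TensorProduct.sum_tmul]
        refine Finset.sum_congr rfl fun l _ => ?_
        rw [TensorProduct.sum_tmul]
        refine Finset.sum_congr rfl fun lam _ => ?_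
        rw [TensorProduct.smul_tmul']
    _ = ∑ l' : L, MonoidAlgebra.single (M := Mgrp K L) (((1:L→*Kˣ), l') : Mgrp K L) 1 ⊗ₜ[K] eLhat K L l' := by
        refine Finset.sum_congr rfl fun l' _ => ?_
        rw [claimB hL l']

lemma Jinv_eq [CharZero K] [Fintype L] [Fintype (L →* Kˣ)]
    (hL : Nat.card (L →* Kˣ) = Nat.card L) :
    Jinv K L = ∑ l : L,
      MonoidAlgebra.single (M := Mgrp K L) (((1:L→*Kˣ), l⁻¹) : Mgrp K L) 1 ⊗ₜ[K] eLhat K L l := by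
  rw [Jinv]
  simp only [finsum_eq_sum_of_fintype]
  calc ∑ lam : L →* Kˣ, eL K L lam ⊗ₜ[K] MonoidAlgebra.of K (Mgrp K L) (lam⁻¹, (1:L))
      = ∑ lam : L →* Kˣ, ∑ l : L, ((Nat.card L : K)⁻¹ * ((lam l⁻¹ : Kˣ) : K)) •
          (MonoidAlgebra.single (M := Mgrp K L) (((1:L→*Kˣ), l) : Mgrp K L) 1 ⊗ₜ[K]
            MonoidAlgebra.single (M := Mgrp K L) ((lam⁻¹, (1:L)) : Mgrp K L) 1) := by
        refine Finset.sum_congr rfl fun lam _ => ?_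
        rw [eL_eq, TensorProduct.sum_tmul]
        refine Finset.sum_congr rfl fun l _ => ?_
        erw [MonoidAlgebra.of_apply, TensorProduct.smul_tmul', MonoidAlgebra.smul_single',
          mul_one]
    _ = ∑ lam : L →* Kˣ, ∑ l : L, ((Nat.card L : K)⁻¹ * ((lam l : Kˣ) : K)) •
          (MonoidAlgebra.single (M := Mgrp K L) (((1:L→*Kˣ), l⁻¹) : Mgrp K L) 1 ⊗ₜ[K]
            MonoidAlgebra.single (M := Mgrp K L) ((lam⁻¹, (1:L)) : Mgrp K L) 1) := by
        refine Finset.sum_congr rfl fun lam _ => ?_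
        refine Fintype.sum_bijective (fun l : L => l⁻¹) inv_involutive.bijective _ _
          (fun l => ?_)
        simp only [inv_inv]
    _ = ∑ lam : L →* Kˣ, ∑ l : L, ((Nat.card L : K)⁻¹ * (((lam⁻¹) l : Kˣ) : K)) •
          (MonoidAlgebra.single (M := Mgrp K L) (((1:L→*Kˣ), l⁻¹) : Mgrp K L) 1 ⊗ₜ[K]
            MonoidAlgebra.single (M := Mgrp K L) ((lam, (1:L)) : Mgrp K L) 1) := by
        refine Fintype.sum_bijective (fun lam : L →* Kˣ => lam⁻¹) (Function.Involutive.bijective (f := fun lam : L →* Kˣ => lam⁻¹) fun lam => by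
            ext y; exact congrArg Units.val (inv_inv (lam y))) _ _
          (fun lam => ?_)
        have hinv : lam⁻¹⁻¹ = lam := by ext y; exact congrArg Units.val (inv_inv (lam y))
        rw [hinv]
    _ = ∑ l : L, ∑ lam : L →* Kˣ, ((Nat.card L : K)⁻¹ * (((lam⁻¹) l : Kˣ) : K)) •
          (MonoidAlgebra.single (M := Mgrp K L) (((1:L→*Kˣ), l⁻¹) : Mgrp K L) 1 ⊗ₜ[K]
            MonoidAlgebra.single (M := Mgrp K L) ((lam, (1:L)) : Mgrp K L) 1) := Finset.sum_comm
    _ = ∑ l : L,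
          MonoidAlgebra.single (M := Mgrp K L) (((1:L→*Kˣ), l⁻¹) : Mgrp K L) 1 ⊗ₜ[K] eLhat K L l := by
        refine Finset.sum_congr rfl fun l _ => ?_
        rw [eLhat_eq, TensorProduct.tmul_sum]
        refine Finset.sum_congr rfl fun lam _ => ?_
        erw [TensorProduct.smul_tmul', TensorProduct.smul_tmul, MonoidAlgebra.smul_single',
          mul_one, hL]
        rfl

lemma conj1 [CharZero K] [Fintype L] [Fintype (L →* Kˣ)]
    (hL : Nat.card (L →* Kˣ) = Nat.card L) :
    (∑ lam : L →* Kˣ, eL K L lam ⊗ₜ[K] MonoidAlgebra.of K (Mgrp K L) (lam, (1 : L))) *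
      (∑ mu : L →* Kˣ, eL K L mu ⊗ₜ[K] MonoidAlgebra.of K (Mgrp K L) (mu⁻¹, (1 : L))) =
      (1 : MonoidAlgebra K (Mgrp K L)) ⊗ₜ[K] (1 : MonoidAlgebra K (Mgrp K L)) := by
  rw [Fintype.sum_mul_sum]
  calc ∑ lam : L →* Kˣ, ∑ mu : L →* Kˣ,
        (eL K L lam ⊗ₜ[K] MonoidAlgebra.of K (Mgrp K L) (lam, (1 : L))) *
          (eL K L mu ⊗ₜ[K] MonoidAlgebra.of K (Mgrp K L) (mu⁻¹, (1 : L)))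
      = ∑ lam : L →* Kˣ, eL K L lam ⊗ₜ[K] (1 : MonoidAlgebra K (Mgrp K L)) := by
        refine Finset.sum_congr rfl fun lam _ => ?_
        rw [Finset.sum_eq_single_of_mem lam (Finset.mem_univ lam)]
        · rw [Algebra.TensorProduct.tmul_mul_tmul, eL_mul_eL, if_pos rfl]
          congr 1
          erw [MonoidAlgebra.of_apply, MonoidAlgebra.of_apply,
            MonoidAlgebra.single_mul_single, mgrp_mul, show lam * lam⁻¹ = 1 from mul_inv_cancel lam,
            show ((1:L) * 1) = 1 from one_mul (1:L), mul_one]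
          exact MonoidAlgebra.one_def.symm
        · intro mu _ hmu
          rw [Algebra.TensorProduct.tmul_mul_tmul, eL_mul_eL,
            if_neg (fun h => hmu h.symm), TensorProduct.zero_tmul]
    _ = (1 : MonoidAlgebra K (Mgrp K L)) ⊗ₜ[K] (1 : MonoidAlgebra K (Mgrp K L)) := by
        rw [← TensorProduct.sum_tmul, sum_eL hL]

lemma conj2 [CharZero K] [Fintype L] [Fintype (L →* Kˣ)]
    (hL : Nat.card (L →* Kˣ) = Nat.card L) :
    Jtwist K L * Jinv K L = 1 := by
  rw [Jtwist_eq hL, Jinv_eq hL, Fintype.sum_mul_sum]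
  calc ∑ l : L, ∑ m : L,
        ((MonoidAlgebra.single (M := Mgrp K L) (((1:L→*Kˣ), l) : Mgrp K L) 1 : MonoidAlgebra K (Mgrp K L)) ⊗ₜ[K] eLhat K L l) *
          ((MonoidAlgebra.single (M := Mgrp K L) (((1:L→*Kˣ), m⁻¹) : Mgrp K L) 1 : MonoidAlgebra K (Mgrp K L)) ⊗ₜ[K] eLhat K L m)
      = ∑ l : L, (1 : MonoidAlgebra K (Mgrp K L)) ⊗ₜ[K] eLhat K L l := by
        refine Finset.sum_congr rfl fun l _ => ?_
        rw [Finset.sum_eq_single_of_mem l (Finset.mem_univ l)]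
        · rw [Algebra.TensorProduct.tmul_mul_tmul, eLhat_mul_eLhat hL, if_pos rfl]
          congr 1
          erw [MonoidAlgebra.single_mul_single, mgrp_mul, show l * l⁻¹ = 1 from mul_inv_cancel l,
            show ((1:L→*Kˣ) * 1) = 1 from one_mul (1:L→*Kˣ), mul_one]
          exact MonoidAlgebra.one_def.symm
        · intro m _ hm
          rw [Algebra.TensorProduct.tmul_mul_tmul, eLhat_mul_eLhat hL,
            if_neg (fun h => hm h.symm), TensorProduct.tmul_zero]
    _ = 1 := by
        rw [← TensorProduct.tmul_sum, sum_eLhat hL]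
        exact (Algebra.TensorProduct.one_def).symm

lemma conj3 [CharZero K] [Fintype L] [Fintype (L →* Kˣ)]
    (hL : Nat.card (L →* Kˣ) = Nat.card L) :
    Jinv K L * Jtwist K L = 1 := by
  rw [mul_comm]
  exact conj2 hL

end Aux

/-- In the Lagrangian setup,
`(Σ_{λ∈L̂} e_λ^L ⊗ λ)·(Σ_{μ∈L̂} e_μ^L ⊗ μ⁻¹) = 1 ⊗ 1` in `K M ⊗ K M`; consequently the twist
`J` of the Lagrangian setup is invertible with
`J⁻¹ = Σ_{λ∈L̂} e_λ^L ⊗ λ⁻¹ = Σ_{l∈L} l⁻¹ ⊗ e_l^{L̂}`. -/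
theorem stmt1 [CharZero K] [Finite L] (hL : Nat.card (L →* Kˣ) = Nat.card L) :
    (∑ᶠ lam : L →* Kˣ, eL K L lam ⊗ₜ[K] MonoidAlgebra.of K (Mgrp K L) (lam, (1 : L))) *
      (∑ᶠ mu : L →* Kˣ, eL K L mu ⊗ₜ[K] MonoidAlgebra.of K (Mgrp K L) (mu⁻¹, (1 : L))) =
      (1 : MonoidAlgebra K (Mgrp K L)) ⊗ₜ[K] (1 : MonoidAlgebra K (Mgrp K L)) ∧
    Jtwist K L * Jinv K L = 1 ∧
    Jinv K L * Jtwist K L = 1 ∧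
    Jinv K L =
      ∑ᶠ l : L, MonoidAlgebra.of K (Mgrp K L) ((1 : L →* Kˣ), l⁻¹) ⊗ₜ[K] eLhat K L l := by
  have hfin : Finite (L →* Kˣ) := auxFiniteHom K L
  letI : Fintype L := Fintype.ofFinite L
  letI : Fintype (L →* Kˣ) := Fintype.ofFinite _
  refine ⟨?_, conj2 hL, conj3 hL, ?_⟩
  · rw [finsum_eq_sum_of_fintype, finsum_eq_sum_of_fintype]
    exact conj1 hL
  · rw [Jinv_eq hL, finsum_eq_sum_of_fintype]
    refine Finset.sum_congr rfl fun l _ => ?_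
    erw [MonoidAlgebra.of_apply]

end
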